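/- arXiv:2502.06523 — 8 statements merged into one kernel-verified Lean document; each statement's English description precedes it below -/
import Mathlib

section
/- For every function Q : Δ(S) × A → ℝ and every a ∈ A, the map b ↦ H_FIB Q(b,a) is convex on Δ(S): for all beliefs b₁, b₂ and λ ∈ [0,1], H_FIB Q(λb₁+(1−λ)b₂, a) ≤ λ·H_FIB Q(b₁,a) + (1−λ)·H_FIB Q(b₂,a). Consequently, any fixed point Q of H_FIB (Q = H_FIB Q) is convex in the belief. -/
open Finset
open scoped Classical

set_option linter.unusedSectionVars false

/-- A belief (probability distribution) over a finite state space `S`. -/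
structure Belief (S : Type*) [Fintype S] where
  val : S → ℝ
  nonneg : ∀ s, 0 ≤ val s
  sum_one : ∑ s, val s = 1

/-- The convex combination `l • b₁ + (1-l) • b₂` of two beliefs. -/
noncomputable def Belief.mix {S : Type*} [Fintype S] (b₁ b₂ : Belief S) (l : ℝ)
    (h0 : 0 ≤ l) (h1 : l ≤ 1) : Belief S where
  val s := l * b₁.val s + (1 - l) * b₂.val s
  nonneg s := add_nonneg (mul_nonneg h0 (b₁.nonneg s))
    (mul_nonneg (by linarith) (b₂.nonneg s))
  sum_one := by
    rw [Finset.sum_add_distrib, ← Finset.mul_sum, ← Finset.mul_sum, b₁.sum_one, b₂.sum_one]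
    ring

/-- `Q : Δ(S) × A → ℝ` is convex in the belief. -/
def ConvexInBelief {S A : Type*} [Fintype S] (Q : Belief S → A → ℝ) : Prop :=
  ∀ (a : A) (b₁ b₂ : Belief S) (l : ℝ) (h0 : 0 ≤ l) (h1 : l ≤ 1),
    Q (Belief.mix b₁ b₂ l h0 h1) a ≤ l * Q b₁ a + (1 - l) * Q b₂ a

/-- A finite POMDP: transition function `T s a s' = T(s'|s,a)`, observation function
`Z a s' o = Ω(o|a,s')`, rewards `R`, discount `γ ∈ (0,1)`. -/
structure POMDP (S A O : Type*) [Fintype S] [Fintype A] [Fintype O] where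
  T : S → A → S → ℝ
  T_nonneg : ∀ s a s', 0 ≤ T s a s'
  T_sum_one : ∀ s a, ∑ s', T s a s' = 1
  Z : A → S → O → ℝ
  Z_nonneg : ∀ a s' o, 0 ≤ Z a s' o
  Z_sum_one : ∀ a s', ∑ o, Z a s' o = 1
  R : S → A → ℝ
  γ : ℝ
  γ_pos : 0 < γ
  γ_lt_one : γ < 1

namespace POMDP

variable {S A O : Type*} [Fintype S] [Fintype A] [Fintype O] [Nonempty S] [Nonempty A]
  [Nonempty O]
variable (M : POMDP S A O)

/-- `Pr(s',o|s,a)` -/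
def prSO (s : S) (a : A) (s' : S) (o : O) : ℝ := M.Z a s' o * M.T s a s'

lemma prSO_nonneg (s : S) (a : A) (s' : S) (o : O) : 0 ≤ M.prSO s a s' o :=
  mul_nonneg (M.Z_nonneg a s' o) (M.T_nonneg s a s')

/-- `Pr(o|s,a)` -/
def prO (s : S) (a : A) (o : O) : ℝ := ∑ s', M.prSO s a s' o

/-- `Pr(s',o|b,a)` -/
def bprSO (b : Belief S) (a : A) (s' : S) (o : O) : ℝ := ∑ s, b.val s * M.prSO s a s' o

lemma bprSO_nonneg (b : Belief S) (a : A) (s' : S) (o : O) : 0 ≤ M.bprSO b a s' o :=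
  Finset.sum_nonneg fun s _ => mul_nonneg (b.nonneg s) (M.prSO_nonneg s a s' o)

/-- `Pr(o|b,a)` -/
def bprO (b : Belief S) (a : A) (o : O) : ℝ := ∑ s', M.bprSO b a s' o

/-- The unit belief `δ_s`. -/
noncomputable def unit (s : S) : Belief S where
  val s' := if s' = s then 1 else 0
  nonneg s' := by by_cases h : s' = s <;> simp [h]
  sum_one := by simp

/-- The posterior belief `b_{b,a,o}`, defined when `Pr(o|b,a) > 0`. -/
noncomputable def post (b : Belief S) (a : A) (o : O) (h : 0 < M.bprO b a o) : Belief S where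
  val s' := M.bprSO b a s' o / M.bprO b a o
  nonneg s' := div_nonneg (M.bprSO_nonneg b a s' o) h.le
  sum_one := by
    rw [← Finset.sum_div]
    exact div_self (ne_of_gt h)

/-- The one-step belief `b_{s,a,o} = b_{δ_s,a,o}`, defined when `Pr(o|s,a) > 0`. -/
noncomputable def osb (s : S) (a : A) (o : O) (h : 0 < M.prO s a o) : Belief S where
  val s' := M.prSO s a s' o / M.prO s a o
  nonneg s' := div_nonneg (M.prSO_nonneg s a s' o) h.le
  sum_one := by
    unfold prO
    rw [← Finset.sum_div]
    exact div_self (ne_of_gt h)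

/-- Expected reward `R(b,a)`. -/
noncomputable def expR (b : Belief S) (a : A) : ℝ := ∑ s, b.val s * M.R s a

/-- The fast informed bound operator `H_FIB`. -/
noncomputable def HFIB (Q : Belief S → A → ℝ) (b : Belief S) (a : A) : ℝ :=
  M.expR b a + M.γ * ∑ o, Finset.univ.sup' Finset.univ_nonempty
    (fun a' => ∑ s', M.bprSO b a s' o * Q (unit s') a')

/-- The tighter informed bound operator `H_TIB`. -/
noncomputable def HTIB (Q : Belief S → A → ℝ) (b : Belief S) (a : A) : ℝ :=
  M.expR b a + M.γ * ∑ o, Finset.univ.sup' Finset.univ_nonempty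
    (fun a' => ∑ s, if h : 0 < M.prO s a o then
      b.val s * M.prO s a o * Q (M.osb s a o h) a' else 0)

/-- The optimal Bellman operator `H_POMDP`. -/
noncomputable def HPOMDP (Q : Belief S → A → ℝ) (b : Belief S) (a : A) : ℝ :=
  M.expR b a + M.γ * ∑ o, if h : 0 < M.bprO b a o then
    M.bprO b a o * Finset.univ.sup' Finset.univ_nonempty (fun a' => Q (M.post b a o h) a')
  else 0

/-- Index type for the family `B_SAO`: `none` indexes the initial belief `b₀`,
`some (s,a,o)` (with `Pr(o|s,a) > 0`) indexes the one-step belief `b_{s,a,o}`. -/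
abbrev OSIdx : Type _ := Option {x : S × A × O // 0 < M.prO x.1 x.2.1 x.2.2}

/-- The member of the family `B_SAO` (with initial belief `b₀`) at a given index. -/
noncomputable def member (b₀ : Belief S) : M.OSIdx → Belief S
  | none => b₀
  | some x => M.osb x.1.1 x.1.2.1 x.1.2.2 x.2

/-- `w` is a weight function for the belief `tgt` over the family `B_SAO`. -/
def IsWeight (b₀ : Belief S) (tgt : Belief S) (w : M.OSIdx → ℝ) : Prop :=
  (∀ i, 0 ≤ w i) ∧ ∀ s, ∑ i, w i * (M.member b₀ i).val s = tgt.val s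

/-- The optimized tighter informed bound operator `H_OTIB`. -/
noncomputable def HOTIB (b₀ : Belief S) (Q : Belief S → A → ℝ) (b : Belief S) (a : A) : ℝ :=
  M.expR b a + M.γ * ∑ o, if h : 0 < M.bprO b a o then
    Finset.univ.sup' Finset.univ_nonempty (fun a' =>
      M.bprO b a o * ⨅ w : {w : M.OSIdx → ℝ // M.IsWeight b₀ (M.post b a o h) w},
        ∑ i, (w : M.OSIdx → ℝ) i * Q (M.member b₀ i) a')
  else 0

/-- The operator `H_ŵ` induced by a weight selection `W`. -/
noncomputable def Hsel (b₀ : Belief S)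
    (W : ∀ (b : Belief S) (a : A) (o : O), 0 < M.bprO b a o → (M.OSIdx → ℝ))
    (Q : Belief S → A → ℝ) (b : Belief S) (a : A) : ℝ :=
  M.expR b a + M.γ * ∑ o, if h : 0 < M.bprO b a o then
    Finset.univ.sup' Finset.univ_nonempty (fun a' =>
      M.bprO b a o * ∑ i, W b a o h i * Q (M.member b₀ i) a')
  else 0

end POMDP

/-- For any `Q`, `H_FIB Q` is convex in the belief; consequently any fixed point of `H_FIB`
is convex in the belief. -/
theorem HFIB_convex {S A O : Type*} [Fintype S] [Fintype A] [Fintype O]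
    [Nonempty S] [Nonempty A] [Nonempty O] (M : POMDP S A O) :
    (∀ Q : Belief S → A → ℝ, ConvexInBelief (fun b a => M.HFIB Q b a)) ∧
    (∀ Q : Belief S → A → ℝ, (∀ b a, Q b a = M.HFIB Q b a) → ConvexInBelief Q) := by
  have main : ∀ Q : Belief S → A → ℝ, ConvexInBelief (fun b a => M.HFIB Q b a) := by
    intro Q a b₁ b₂ l h0 h1
    simp only [POMDP.HFIB]
    have hR : M.expR (Belief.mix b₁ b₂ l h0 h1) a
        = l * M.expR b₁ a + (1 - l) * M.expR b₂ a := by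
      simp only [POMDP.expR, Belief.mix, Finset.mul_sum, ← Finset.sum_add_distrib]
      apply Finset.sum_congr rfl; intro s _; ring
    have hbpr : ∀ s' o, M.bprSO (Belief.mix b₁ b₂ l h0 h1) a s' o
        = l * M.bprSO b₁ a s' o + (1 - l) * M.bprSO b₂ a s' o := by
      intro s' o
      simp only [POMDP.bprSO, Belief.mix, Finset.mul_sum, ← Finset.sum_add_distrib]
      apply Finset.sum_congr rfl; intro s _; ring
    have hsup : ∀ o : O,
        (Finset.univ.sup' Finset.univ_nonempty
          (fun a' => ∑ s', M.bprSO (Belief.mix b₁ b₂ l h0 h1) a s' o * Q (POMDP.unit s') a'))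
        ≤ l * Finset.univ.sup' Finset.univ_nonempty
            (fun a' => ∑ s', M.bprSO b₁ a s' o * Q (POMDP.unit s') a')
          + (1 - l) * Finset.univ.sup' Finset.univ_nonempty
            (fun a' => ∑ s', M.bprSO b₂ a s' o * Q (POMDP.unit s') a') := by
      intro o
      apply Finset.sup'_le
      intro a' _
      have h1' : (∑ s', M.bprSO b₁ a s' o * Q (POMDP.unit s') a')
          ≤ Finset.univ.sup' Finset.univ_nonempty
            (fun a' => ∑ s', M.bprSO b₁ a s' o * Q (POMDP.unit s') a') :=
        Finset.le_sup' (fun a' => ∑ s', M.bprSO b₁ a s' o * Q (POMDP.unit s') a')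
          (Finset.mem_univ a')
      have h2' : (∑ s', M.bprSO b₂ a s' o * Q (POMDP.unit s') a')
          ≤ Finset.univ.sup' Finset.univ_nonempty
            (fun a' => ∑ s', M.bprSO b₂ a s' o * Q (POMDP.unit s') a') :=
        Finset.le_sup' (fun a' => ∑ s', M.bprSO b₂ a s' o * Q (POMDP.unit s') a')
          (Finset.mem_univ a')
      have heq : (∑ s', M.bprSO (Belief.mix b₁ b₂ l h0 h1) a s' o * Q (POMDP.unit s') a')
          = l * (∑ s', M.bprSO b₁ a s' o * Q (POMDP.unit s') a')
            + (1 - l) * (∑ s', M.bprSO b₂ a s' o * Q (POMDP.unit s') a') := by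
        simp only [Finset.mul_sum, ← Finset.sum_add_distrib]
        apply Finset.sum_congr rfl; intro s' _; rw [hbpr]; ring
      rw [heq]
      have := mul_le_mul_of_nonneg_left h1' h0
      have := mul_le_mul_of_nonneg_left h2' (by linarith : (0:ℝ) ≤ 1 - l)
      linarith
    have hsum : (∑ o, Finset.univ.sup' Finset.univ_nonempty
          (fun a' => ∑ s', M.bprSO (Belief.mix b₁ b₂ l h0 h1) a s' o * Q (POMDP.unit s') a'))
        ≤ l * (∑ o, Finset.univ.sup' Finset.univ_nonempty
            (fun a' => ∑ s', M.bprSO b₁ a s' o * Q (POMDP.unit s') a'))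
          + (1 - l) * (∑ o, Finset.univ.sup' Finset.univ_nonempty
            (fun a' => ∑ s', M.bprSO b₂ a s' o * Q (POMDP.unit s') a')) := by
      rw [Finset.mul_sum, Finset.mul_sum, ← Finset.sum_add_distrib]
      exact Finset.sum_le_sum fun o _ => hsup o
    have hγ := M.γ_pos.le
    have := mul_le_mul_of_nonneg_left hsum hγ
    rw [hR]; ring_nf; ring_nf at this; linarith
  refine ⟨main, fun Q hfix a b₁ b₂ l h0 h1 => ?_⟩
  rw [hfix (Belief.mix b₁ b₂ l h0 h1) a, hfix b₁ a, hfix b₂ a]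
  exact main Q a b₁ b₂ l h0 h1
end

section
/- Let b be a belief, a ∈ A and o ∈ O with Pr(o|b,a) > 0. Then for every s' ∈ S: ∑_{s∈S with Pr(o|s,a)>0} b(s)·Pr(o|s,a)·b_{s,a,o}(s') = Pr(o|b,a)·b_{b,a,o}(s'). Equivalently, the canonical weights given by w_{b,a,o}(b_{s,a,o}) = b(s)·Pr(o|s,a)/Pr(o|b,a) for each one-step belief b_{s,a,o} (and weight 0 on b₀) form a weight function for b_{b,a,o} over B_SAO. -/
open Finset
open scoped Classical

set_option linter.unusedSectionVars false

/-- The canonical weights `b(s)·Pr(o|s,a)/Pr(o|b,a)` on the one-step beliefs represent the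
posterior belief `b_{b,a,o}`: for every `s'`,
`∑_{s : Pr(o|s,a)>0} b(s)·Pr(o|s,a)·b_{s,a,o}(s') = Pr(o|b,a)·b_{b,a,o}(s')`. -/
theorem canonical_weights {S A O : Type*} [Fintype S] [Fintype A] [Fintype O]
    [Nonempty S] [Nonempty A] [Nonempty O] (M : POMDP S A O)
    (b : Belief S) (a : A) (o : O) (h : 0 < M.bprO b a o) (s' : S) :
    (∑ s, if hs : 0 < M.prO s a o then
        b.val s * M.prO s a o * (M.osb s a o hs).val s' else 0)
      = M.bprO b a o * (M.post b a o h).val s' := by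
  have key : ∀ s : S, (if hs : 0 < M.prO s a o then
      b.val s * M.prO s a o * (M.osb s a o hs).val s' else 0)
      = b.val s * M.prSO s a s' o := by
    intro s
    by_cases hs : 0 < M.prO s a o
    · simp only [dif_pos hs, POMDP.osb]
      field_simp
    · simp only [dif_neg hs]
      have h0 : M.prO s a o = 0 :=
        le_antisymm (not_lt.mp hs)
          (Finset.sum_nonneg fun x _ => M.prSO_nonneg s a x o)
      have : M.prSO s a s' o = 0 := by
        have := (Finset.sum_eq_zero_iff_of_nonneg
          (fun x _ => M.prSO_nonneg s a x o)).mp h0 s' (Finset.mem_univ s')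
        exact this
      rw [this]; ring
  simp only [key, POMDP.post]
  rw [mul_div_cancel₀ _ (ne_of_gt h)]
  rfl
end

section
/- For all functions Q, Q' : Δ(S) × A → ℝ, every constant C ≥ 0 such that |Q(b',a') − Q'(b',a')| ≤ C for every belief b' ∈ Δ(S) and every a' ∈ A, every belief b ∈ Δ(S) and every a ∈ A: |H_TIB Q(b,a) − H_TIB Q'(b,a)| ≤ γ·C. In particular H_TIB is a contraction with Lipschitz constant γ with respect to the supremum norm on bounded functions Δ(S) × A → ℝ. -/
open Finset
open scoped Classical

set_option linter.unusedSectionVars false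

/-- `H_TIB` contracts sup-distance by a factor `γ`. -/
theorem HTIB_contraction {S A O : Type*} [Fintype S] [Fintype A] [Fintype O]
    [Nonempty S] [Nonempty A] [Nonempty O] (M : POMDP S A O)
    (Q Q' : Belief S → A → ℝ) (C : ℝ) (hC : 0 ≤ C)
    (h : ∀ (b' : Belief S) (a' : A), |Q b' a' - Q' b' a'| ≤ C)
    (b : Belief S) (a : A) :
    |M.HTIB Q b a - M.HTIB Q' b a| ≤ M.γ * C := by
  have hsup : ∀ (f g : A → ℝ) (c : ℝ), (∀ a', |f a' - g a'| ≤ c) →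
      |Finset.univ.sup' Finset.univ_nonempty f - Finset.univ.sup' Finset.univ_nonempty g| ≤ c := by
    intro f g c hfg
    rw [abs_sub_le_iff]
    constructor
    · rw [sub_le_iff_le_add]
      apply Finset.sup'_le
      intro a' _
      have h1 := (abs_sub_le_iff.mp (hfg a')).1
      have h2 : g a' ≤ Finset.univ.sup' Finset.univ_nonempty g :=
        Finset.le_sup' g (Finset.mem_univ a')
      linarith
    · rw [sub_le_iff_le_add]
      apply Finset.sup'_le
      intro a' _
      have h1 := (abs_sub_le_iff.mp (hfg a')).2
      have h2 : f a' ≤ Finset.univ.sup' Finset.univ_nonempty f :=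
        Finset.le_sup' f (Finset.mem_univ a')
      linarith
  have hprO_nonneg : ∀ s o, 0 ≤ M.prO s a o := fun s o =>
    Finset.sum_nonneg fun s' _ => M.prSO_nonneg s a s' o
  have key : ∀ o : O,
      |Finset.univ.sup' Finset.univ_nonempty (fun a' => ∑ s, if h : 0 < M.prO s a o then
          b.val s * M.prO s a o * Q (M.osb s a o h) a' else 0)
       - Finset.univ.sup' Finset.univ_nonempty (fun a' => ∑ s, if h : 0 < M.prO s a o then
          b.val s * M.prO s a o * Q' (M.osb s a o h) a' else 0)|
      ≤ (∑ s, b.val s * M.prO s a o) * C := by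
    intro o
    apply hsup
    intro a'
    rw [← Finset.sum_sub_distrib, Finset.sum_mul]
    calc |∑ s, ((if h : 0 < M.prO s a o then b.val s * M.prO s a o * Q (M.osb s a o h) a' else 0)
          - (if h : 0 < M.prO s a o then b.val s * M.prO s a o * Q' (M.osb s a o h) a' else 0))|
        ≤ ∑ s, |(if h : 0 < M.prO s a o then b.val s * M.prO s a o * Q (M.osb s a o h) a' else 0)
          - (if h : 0 < M.prO s a o then b.val s * M.prO s a o * Q' (M.osb s a o h) a' else 0)| :=
          Finset.abs_sum_le_sum_abs _ _
      _ ≤ ∑ s, b.val s * M.prO s a o * C := by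
          apply Finset.sum_le_sum
          intro s _
          by_cases hpos : 0 < M.prO s a o
          · simp only [dif_pos hpos]
            rw [← mul_sub, abs_mul]
            have hnn : 0 ≤ b.val s * M.prO s a o := mul_nonneg (b.nonneg s) hpos.le
            rw [abs_of_nonneg hnn]
            exact mul_le_mul_of_nonneg_left (h (M.osb s a o hpos) a') hnn
          · simp only [dif_neg hpos]
            simpa using mul_nonneg (mul_nonneg (b.nonneg s) (hprO_nonneg s o)) hC
  have hsum1 : ∑ o, ∑ s, b.val s * M.prO s a o = 1 := by
    rw [Finset.sum_comm]
    have : ∀ s : S, ∑ o, b.val s * M.prO s a o = b.val s := by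
      intro s
      rw [← Finset.mul_sum]
      have : ∑ o, M.prO s a o = 1 := by
        unfold POMDP.prO POMDP.prSO
        rw [Finset.sum_comm]
        calc ∑ s', ∑ o, M.Z a s' o * M.T s a s'
            = ∑ s', M.T s a s' := by
              apply Finset.sum_congr rfl
              intro s' _
              rw [← Finset.sum_mul, M.Z_sum_one, one_mul]
          _ = 1 := M.T_sum_one s a
      rw [this, mul_one]
    rw [Finset.sum_congr rfl fun s _ => this s, b.sum_one]
  unfold POMDP.HTIB
  rw [add_sub_add_left_eq_sub, ← mul_sub, abs_mul, abs_of_pos M.γ_pos]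
  apply mul_le_mul_of_nonneg_left _ M.γ_pos.le
  rw [← Finset.sum_sub_distrib]
  calc |∑ o, _| ≤ ∑ o, |_| := Finset.abs_sum_le_sum_abs _ _
    _ ≤ ∑ o, (∑ s, b.val s * M.prO s a o) * C := Finset.sum_le_sum fun o _ => key o
    _ = C := by rw [← Finset.sum_mul, hsum1, one_mul]
end

section
/- For every function Q : Δ(S) × A → ℝ and every a ∈ A, the map b ↦ H_TIB Q(b,a) is convex on Δ(S): for all beliefs b₁, b₂ and λ ∈ [0,1], H_TIB Q(λb₁+(1−λ)b₂, a) ≤ λ·H_TIB Q(b₁,a) + (1−λ)·H_TIB Q(b₂,a). Consequently, any fixed point Q of H_TIB (Q = H_TIB Q) is convex in the belief. -/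
open Finset
open scoped Classical

set_option linter.unusedSectionVars false

/-- For any `Q`, `H_TIB Q` is convex in the belief; consequently any fixed point of `H_TIB`
is convex in the belief. -/
theorem HTIB_convex {S A O : Type*} [Fintype S] [Fintype A] [Fintype O]
    [Nonempty S] [Nonempty A] [Nonempty O] (M : POMDP S A O) :
    (∀ Q : Belief S → A → ℝ, ConvexInBelief (fun b a => M.HTIB Q b a)) ∧
    (∀ Q : Belief S → A → ℝ, (∀ b a, Q b a = M.HTIB Q b a) → ConvexInBelief Q) := by
  have key : ∀ Q : Belief S → A → ℝ, ConvexInBelief (fun b a => M.HTIB Q b a) := by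
    intro Q a b₁ b₂ l h0 h1
    simp only [POMDP.HTIB]
    have hR : M.expR (Belief.mix b₁ b₂ l h0 h1) a
        = l * M.expR b₁ a + (1 - l) * M.expR b₂ a := by
      simp only [POMDP.expR, Belief.mix, Finset.mul_sum, ← Finset.sum_add_distrib]
      exact Finset.sum_congr rfl fun s _ => by ring
    have hlin : ∀ (o : O) (a' : A),
        (∑ s, if h : 0 < M.prO s a o then
          (Belief.mix b₁ b₂ l h0 h1).val s * M.prO s a o * Q (M.osb s a o h) a' else 0)
        = l * (∑ s, if h : 0 < M.prO s a o then
          b₁.val s * M.prO s a o * Q (M.osb s a o h) a' else 0)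
        + (1 - l) * (∑ s, if h : 0 < M.prO s a o then
          b₂.val s * M.prO s a o * Q (M.osb s a o h) a' else 0) := by
      intro o a'
      rw [Finset.mul_sum, Finset.mul_sum, ← Finset.sum_add_distrib]
      refine Finset.sum_congr rfl fun s _ => ?_
      by_cases h : 0 < M.prO s a o <;> simp [h, Belief.mix] <;> ring
    have hsup : ∀ o : O,
        Finset.univ.sup' Finset.univ_nonempty (fun a' => ∑ s, if h : 0 < M.prO s a o then
          (Belief.mix b₁ b₂ l h0 h1).val s * M.prO s a o * Q (M.osb s a o h) a' else 0)
        ≤ l * Finset.univ.sup' Finset.univ_nonempty (fun a' => ∑ s, if h : 0 < M.prO s a o then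
          b₁.val s * M.prO s a o * Q (M.osb s a o h) a' else 0)
        + (1 - l) * Finset.univ.sup' Finset.univ_nonempty (fun a' => ∑ s,
          if h : 0 < M.prO s a o then
          b₂.val s * M.prO s a o * Q (M.osb s a o h) a' else 0) := by
      intro o
      apply Finset.sup'_le
      intro a' _
      rw [hlin o a']
      have h1' : (0:ℝ) ≤ 1 - l := by linarith
      have e1 := Finset.le_sup' (fun a'' => ∑ s, if h : 0 < M.prO s a o then
        b₁.val s * M.prO s a o * Q (M.osb s a o h) a'' else 0) (Finset.mem_univ a')
      have e2 := Finset.le_sup' (fun a'' => ∑ s, if h : 0 < M.prO s a o then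
        b₂.val s * M.prO s a o * Q (M.osb s a o h) a'' else 0) (Finset.mem_univ a')
      exact add_le_add (mul_le_mul_of_nonneg_left e1 h0) (mul_le_mul_of_nonneg_left e2 h1')
    have hsum : (∑ o, Finset.univ.sup' Finset.univ_nonempty
          (fun a' => ∑ s, if h : 0 < M.prO s a o then
            (Belief.mix b₁ b₂ l h0 h1).val s * M.prO s a o * Q (M.osb s a o h) a' else 0))
        ≤ l * (∑ o, Finset.univ.sup' Finset.univ_nonempty
          (fun a' => ∑ s, if h : 0 < M.prO s a o then
            b₁.val s * M.prO s a o * Q (M.osb s a o h) a' else 0))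
        + (1 - l) * (∑ o, Finset.univ.sup' Finset.univ_nonempty
          (fun a' => ∑ s, if h : 0 < M.prO s a o then
            b₂.val s * M.prO s a o * Q (M.osb s a o h) a' else 0)) := by
      rw [Finset.mul_sum, Finset.mul_sum, ← Finset.sum_add_distrib]
      exact Finset.sum_le_sum fun o _ => hsup o
    rw [hR]
    nlinarith [mul_le_mul_of_nonneg_left hsum M.γ_pos.le]
  refine ⟨key, fun Q hfix a b₁ b₂ l h0 h1 => ?_⟩
  rw [hfix (Belief.mix b₁ b₂ l h0 h1) a, hfix b₁ a, hfix b₂ a]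
  exact key Q a b₁ b₂ l h0 h1
end

section
/- If Q : Δ(S) × A → ℝ is convex in the belief, then for every belief b ∈ Δ(S) and every a ∈ A: H_TIB Q(b,a) ≤ H_FIB Q(b,a). -/
open Finset
open scoped Classical

set_option linter.unusedSectionVars false

lemma Belief.ext' {S : Type*} [Fintype S] {b₁ b₂ : Belief S} (h : b₁.val = b₂.val) :
    b₁ = b₂ := by
  cases b₁; cases b₂; simpa using h

lemma jensen_aux {S A : Type*} [Fintype S] (Q : Belief S → A → ℝ) (hQ : ConvexInBelief Q)
    (a : A) : ∀ (t : Finset S) (b : Belief S), (∀ s ∉ t, b.val s = 0) →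
    Q b a ≤ ∑ s ∈ t, b.val s * Q (POMDP.unit s) a := by
  intro t
  induction t using Finset.induction_on with
  | empty =>
    intro b hb
    exfalso
    have : ∑ s, b.val s = 0 := Finset.sum_eq_zero fun s _ => hb s (by simp)
    rw [b.sum_one] at this; norm_num at this
  | @insert s₀ t' hs ih =>
    intro b hb
    set l := b.val s₀ with hl
    have h0 : 0 ≤ l := b.nonneg s₀
    have hrest : ∑ s ∈ Finset.univ.erase s₀, b.val s = 1 - l := by
      have := b.sum_one
      rw [← Finset.add_sum_erase _ _ (Finset.mem_univ s₀)] at this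
      linarith
    have h1 : l ≤ 1 := by
      have : 0 ≤ ∑ s ∈ Finset.univ.erase s₀, b.val s :=
        Finset.sum_nonneg fun s _ => b.nonneg s
      linarith
    by_cases hl1 : l = 1
    · have hb0 : ∀ s, s ≠ s₀ → b.val s = 0 := by
        intro s hsne
        have hz : ∑ s ∈ Finset.univ.erase s₀, b.val s = 0 := by rw [hrest, hl1]; ring
        have := (Finset.sum_eq_zero_iff_of_nonneg (fun s _ => b.nonneg s)).mp hz s
          (Finset.mem_erase.mpr ⟨hsne, Finset.mem_univ s⟩)
        exact this
      have hbe : b = POMDP.unit s₀ := by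
        apply Belief.ext'
        funext s
        by_cases h : s = s₀
        · simp [POMDP.unit, h, ← hl, hl1]
        · simp [POMDP.unit, h, hb0 s h]
      rw [hbe, Finset.sum_insert hs]
      have : ∑ s ∈ t', (POMDP.unit s₀ : Belief S).val s * Q (POMDP.unit s) a = 0 := by
        apply Finset.sum_eq_zero
        intro s hst
        have : s ≠ s₀ := fun h => hs (h ▸ hst)
        simp [POMDP.unit, this]
      rw [this]
      simp [POMDP.unit]
    · have hlt : l < 1 := lt_of_le_of_ne h1 hl1
      have hne : (1 : ℝ) - l ≠ 0 := by linarith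
      set b' : Belief S := ⟨fun s => if s = s₀ then 0 else b.val s / (1 - l),
        fun s => by
          by_cases h : s = s₀
          · simp [h]
          · simp only [h, if_false]
            exact div_nonneg (b.nonneg s) (by linarith),
        by
          have : ∑ s, (if s = s₀ then (0:ℝ) else b.val s / (1 - l)) =
              ∑ s ∈ Finset.univ.erase s₀, b.val s / (1 - l) := by
            rw [← Finset.add_sum_erase Finset.univ
              (fun s => if s = s₀ then (0:ℝ) else b.val s / (1 - l))
              (Finset.mem_univ s₀)]
            simp only [if_pos, zero_add, if_true]
            apply Finset.sum_congr rfl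
            intro s hs2
            exact if_neg (Finset.mem_erase.mp hs2).1
          rw [this, ← Finset.sum_div, hrest, div_self hne]⟩ with hb'
      have hmix : b = Belief.mix (POMDP.unit s₀) b' l h0 h1 := by
        apply Belief.ext'
        funext s
        by_cases h : s = s₀
        · simp [Belief.mix, POMDP.unit, hb', h, ← hl]
        · simp only [Belief.mix, POMDP.unit, hb', h, if_false, mul_zero, zero_add]
          field_simp
      have step1 : Q b a ≤ l * Q (POMDP.unit s₀) a + (1 - l) * Q b' a := by
        rw [hmix]; exact hQ a _ _ l h0 h1
      have hb'supp : ∀ s ∉ t', b'.val s = 0 := by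
        intro s hst
        by_cases h : s = s₀
        · simp [hb', h]
        · have : s ∉ insert s₀ t' := by simp [h, hst]
          simp [hb', h, hb s this]
      have step2 := ih b' hb'supp
      rw [Finset.sum_insert hs]
      have key : ∑ s ∈ t', b'.val s * Q (POMDP.unit s) a =
          (∑ s ∈ t', b.val s * Q (POMDP.unit s) a) / (1 - l) := by
        rw [Finset.sum_div]
        apply Finset.sum_congr rfl
        intro s hst
        have h : s ≠ s₀ := fun h => hs (h ▸ hst)
        simp only [hb', h, if_false]
        ring
      calc Q b a ≤ l * Q (POMDP.unit s₀) a + (1 - l) * Q b' a := step1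
        _ ≤ l * Q (POMDP.unit s₀) a +
            (1 - l) * ((∑ s ∈ t', b.val s * Q (POMDP.unit s) a) / (1 - l)) := by
            rw [← key]
            have : 0 ≤ 1 - l := by linarith
            nlinarith [step2]
        _ = b.val s₀ * Q (POMDP.unit s₀) a + ∑ s ∈ t', b.val s * Q (POMDP.unit s) a := by
            field_simp
            linear_combination (Q (POMDP.unit s₀) a) * hl

lemma jensen {S A : Type*} [Fintype S] (Q : Belief S → A → ℝ) (hQ : ConvexInBelief Q)
    (a : A) (b : Belief S) : Q b a ≤ ∑ s, b.val s * Q (POMDP.unit s) a :=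
  jensen_aux Q hQ a Finset.univ b (fun s hs => absurd (Finset.mem_univ s) hs)

/-- If `Q` is convex in the belief then `H_TIB Q ≤ H_FIB Q` pointwise. -/
theorem HTIB_le_HFIB {S A O : Type*} [Fintype S] [Fintype A] [Fintype O]
    [Nonempty S] [Nonempty A] [Nonempty O] (M : POMDP S A O)
    (Q : Belief S → A → ℝ) (hQ : ConvexInBelief Q) (b : Belief S) (a : A) :
    M.HTIB Q b a ≤ M.HFIB Q b a := by
  unfold POMDP.HTIB POMDP.HFIB
  apply add_le_add le_rfl
  apply mul_le_mul_of_nonneg_left _ M.γ_pos.le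
  apply Finset.sum_le_sum
  intro o _
  apply Finset.sup'_le
  intro a' _
  refine le_trans ?_ (Finset.le_sup' _ (Finset.mem_univ a'))
  have hrhs : ∑ s', M.bprSO b a s' o * Q (POMDP.unit s') a' =
      ∑ s, ∑ s', b.val s * M.prSO s a s' o * Q (POMDP.unit s') a' := by
    rw [Finset.sum_comm]
    apply Finset.sum_congr rfl
    intro s' _
    rw [POMDP.bprSO, Finset.sum_mul]
  rw [hrhs]
  apply Finset.sum_le_sum
  intro s _
  split_ifs with h
  · have hj := jensen Q hQ a' (M.osb s a o h)
    have hnn : 0 ≤ b.val s * M.prO s a o := mul_nonneg (b.nonneg s) h.le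
    calc b.val s * M.prO s a o * Q (M.osb s a o h) a'
        ≤ b.val s * M.prO s a o * ∑ s', (M.osb s a o h).val s' * Q (POMDP.unit s') a' :=
          mul_le_mul_of_nonneg_left hj hnn
      _ = ∑ s', b.val s * M.prSO s a s' o * Q (POMDP.unit s') a' := by
          rw [Finset.mul_sum]
          apply Finset.sum_congr rfl
          intro s' _
          simp only [POMDP.osb]
          field_simp
  · have hO : M.prO s a o = 0 :=
      le_antisymm (not_lt.mp h) (Finset.sum_nonneg fun s' _ => M.prSO_nonneg s a s' o)
    have hz : ∀ s', M.prSO s a s' o = 0 := fun s' =>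
      (Finset.sum_eq_zero_iff_of_nonneg (fun s' _ => M.prSO_nonneg s a s' o)).mp hO s'
        (Finset.mem_univ s')
    rw [Finset.sum_eq_zero fun s' _ => by rw [hz s']; ring]
end

section
/- Let Q_F, Q_T : Δ(S) × A → ℝ be bounded functions with Q_F = H_FIB Q_F and Q_T = H_TIB Q_T. Then for every belief b ∈ Δ(S) and every a ∈ A: Q_T(b,a) ≤ Q_F(b,a). -/
open Finset
open scoped Classical

set_option linter.unusedSectionVars false

namespace POMDP

variable {S A O : Type*} [Fintype S] [Fintype A] [Fintype O] [Nonempty S] [Nonempty A]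
  [Nonempty O]
variable (M : POMDP S A O)

lemma expR_unit (s : S) (a : A) : M.expR (unit s) a = M.R s a := by
  simp [expR, unit]

lemma bprSO_unit (s : S) (a : A) (s' : S) (o : O) :
    M.bprSO (unit s) a s' o = M.prSO s a s' o := by
  simp [bprSO, unit]

lemma prO_nonneg (s : S) (a : A) (o : O) : 0 ≤ M.prO s a o :=
  Finset.sum_nonneg fun s' _ => M.prSO_nonneg s a s' o

lemma prO_sum_o (s : S) (a : A) : ∑ o, M.prO s a o = 1 := by
  unfold prO prSO
  rw [Finset.sum_comm]
  simp only [← Finset.sum_mul, M.Z_sum_one, one_mul]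
  exact M.T_sum_one s a

/-- Jensen: fixed points of `HFIB` are below the barycentric combination of unit values. -/
lemma fib_jensen (QF : Belief S → A → ℝ) (hQF : ∀ b a, QF b a = M.HFIB QF b a)
    (b : Belief S) (a : A) : QF b a ≤ ∑ s, b.val s * QF (unit s) a := by
  conv_lhs => rw [hQF]
  have hrw : ∀ s, QF (unit s) a = M.HFIB QF (unit s) a := fun s => hQF _ a
  calc M.HFIB QF b a
      = M.expR b a + M.γ * ∑ o, Finset.univ.sup' Finset.univ_nonempty
        (fun a' => ∑ s', M.bprSO b a s' o * QF (unit s') a') := rfl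
    _ ≤ (∑ s, b.val s * M.R s a) + M.γ * ∑ o, ∑ s, b.val s *
        Finset.univ.sup' Finset.univ_nonempty
          (fun a' => ∑ s', M.prSO s a s' o * QF (unit s') a') := by
        apply add_le_add le_rfl
        apply mul_le_mul_of_nonneg_left _ M.γ_pos.le
        apply Finset.sum_le_sum
        intro o _
        apply Finset.sup'_le
        intro a' _
        have hswap : ∑ s', M.bprSO b a s' o * QF (unit s') a'
            = ∑ s, b.val s * ∑ s', M.prSO s a s' o * QF (unit s') a' := by
          unfold bprSO
          simp only [Finset.sum_mul, Finset.mul_sum, mul_assoc]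
          exact Finset.sum_comm
        rw [hswap]
        apply Finset.sum_le_sum
        intro s _
        exact mul_le_mul_of_nonneg_left
          (Finset.le_sup' (fun a'' => ∑ s', M.prSO s a s' o * QF (unit s') a'')
            (Finset.mem_univ a')) (b.nonneg s)
    _ = ∑ s, b.val s * QF (unit s) a := by
        simp only [hrw]
        unfold HFIB
        simp only [expR_unit, bprSO_unit, mul_add, Finset.sum_add_distrib]
        congr 1
        simp only [Finset.mul_sum]
        rw [Finset.sum_comm]
        exact Finset.sum_congr rfl fun s _ => Finset.sum_congr rfl fun o _ => by ring

/-- Key comparison: `HTIB QF ≤ QF` for a fixed point `QF` of `HFIB`. -/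
lemma htib_le (QF : Belief S → A → ℝ) (hQF : ∀ b a, QF b a = M.HFIB QF b a)
    (b : Belief S) (a : A) : M.HTIB QF b a ≤ QF b a := by
  rw [hQF b a]
  unfold HTIB HFIB
  apply add_le_add le_rfl
  apply mul_le_mul_of_nonneg_left _ M.γ_pos.le
  apply Finset.sum_le_sum
  intro o _
  apply Finset.sup'_le
  intro a' _
  refine le_trans ?_ (Finset.le_sup'
    (fun a'' => ∑ s', M.bprSO b a s' o * QF (unit s') a'') (Finset.mem_univ a'))
  have hswap : ∑ s', M.bprSO b a s' o * QF (unit s') a'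
      = ∑ s, b.val s * ∑ s', M.prSO s a s' o * QF (unit s') a' := by
    unfold bprSO
    simp only [Finset.sum_mul, Finset.mul_sum, mul_assoc]
    exact Finset.sum_comm
  rw [hswap]
  apply Finset.sum_le_sum
  intro s _
  by_cases h : 0 < M.prO s a o
  · rw [dif_pos h]
    have hj := M.fib_jensen QF hQF (M.osb s a o h) a'
    have hco : M.prO s a o * ∑ s', (M.osb s a o h).val s' * QF (unit s') a'
        = ∑ s', M.prSO s a s' o * QF (unit s') a' := by
      rw [Finset.mul_sum]
      apply Finset.sum_congr rfl
      intro s' _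
      show M.prO s a o * (M.prSO s a s' o / M.prO s a o * QF (unit s') a') = _
      field_simp
    calc b.val s * M.prO s a o * QF (M.osb s a o h) a'
        ≤ b.val s * M.prO s a o * ∑ s', (M.osb s a o h).val s' * QF (unit s') a' :=
          mul_le_mul_of_nonneg_left hj (mul_nonneg (b.nonneg s) h.le)
      _ = b.val s * ∑ s', M.prSO s a s' o * QF (unit s') a' := by
          rw [mul_assoc, hco]
  · rw [dif_neg h]
    have h0 : M.prO s a o = 0 := le_antisymm (not_lt.mp h) (M.prO_nonneg s a o)
    have hz : ∀ s' ∈ Finset.univ, M.prSO s a s' o = 0 := by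
      intro s' hs'
      have := (Finset.sum_eq_zero_iff_of_nonneg
        (fun s' _ => M.prSO_nonneg s a s' o)).mp h0
      exact this s' hs'
    have : ∑ s', M.prSO s a s' o * QF (unit s') a' = 0 :=
      Finset.sum_eq_zero fun s' hs' => by rw [hz s' hs', zero_mul]
    rw [this, mul_zero]

end POMDP

/-- The tighter informed bound is at least as tight as the fast informed bound:
bounded fixed points satisfy `Q_TIB ≤ Q_FIB` pointwise. -/
theorem QTIB_le_QFIB {S A O : Type*} [Fintype S] [Fintype A] [Fintype O]
    [Nonempty S] [Nonempty A] [Nonempty O] (M : POMDP S A O)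
    (QF QT : Belief S → A → ℝ)
    (hQFbdd : ∃ C : ℝ, ∀ b a, |QF b a| ≤ C) (hQTbdd : ∃ C : ℝ, ∀ b a, |QT b a| ≤ C)
    (hQF : ∀ b a, QF b a = M.HFIB QF b a) (hQT : ∀ b a, QT b a = M.HTIB QT b a)
    (b : Belief S) (a : A) :
    QT b a ≤ QF b a := by
  classical
  obtain ⟨CF, hCF⟩ := hQFbdd
  obtain ⟨CT, hCT⟩ := hQTbdd
  set D : Set ℝ := Set.range (fun p : Belief S × A => QT p.1 p.2 - QF p.1 p.2) with hD
  have hne : D.Nonempty := ⟨QT b a - QF b a, ⟨(b, a), rfl⟩⟩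
  have hbdd : BddAbove D := by
    refine ⟨CT + CF, ?_⟩
    rintro x ⟨⟨b', a'⟩, rfl⟩
    have h1 := (abs_le.mp (hCT b' a')).2
    have h2 := (abs_le.mp (hCF b' a')).1
    simp only
    linarith
  set d := sSup D with hdd
  have hub : ∀ b' a', QT b' a' - QF b' a' ≤ d := fun b' a' => le_csSup hbdd ⟨(b', a'), rfl⟩
  have key : ∀ (b' : Belief S) (a' : A), QT b' a' - QF b' a' ≤ M.γ * d := by
    intro b' a'
    have step1 : M.HTIB QT b' a' ≤ M.HTIB QF b' a' + M.γ * d := by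
      unfold POMDP.HTIB
      set c : O → ℝ := fun o => ∑ s, if 0 < M.prO s a' o then b'.val s * M.prO s a' o else 0
        with hc
      have hc_sum : ∑ o, c o = 1 := by
        rw [hc]
        rw [Finset.sum_comm]
        have : ∀ s ∈ Finset.univ (α := S),
            (∑ o, if 0 < M.prO s a' o then b'.val s * M.prO s a' o else 0)
            = b'.val s := by
          intro s _
          have : ∀ o ∈ Finset.univ (α := O),
              (if 0 < M.prO s a' o then b'.val s * M.prO s a' o else 0)
              = b'.val s * M.prO s a' o := by
            intro o _
            by_cases h : 0 < M.prO s a' o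
            · rw [if_pos h]
            · rw [if_neg h, le_antisymm (not_lt.mp h) (M.prO_nonneg s a' o), mul_zero]
          rw [Finset.sum_congr rfl this, ← Finset.mul_sum, M.prO_sum_o, mul_one]
        rw [Finset.sum_congr rfl this, b'.sum_one]
      have hsup : ∀ o : O,
          Finset.univ.sup' Finset.univ_nonempty (fun a'' => ∑ s,
            if h : 0 < M.prO s a' o then
              b'.val s * M.prO s a' o * QT (M.osb s a' o h) a'' else 0)
          ≤ Finset.univ.sup' Finset.univ_nonempty (fun a'' => ∑ s,
            if h : 0 < M.prO s a' o then
              b'.val s * M.prO s a' o * QF (M.osb s a' o h) a'' else 0) + c o * d := by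
        intro o
        apply Finset.sup'_le
        intro a'' _
        have h1 : (∑ s, if h : 0 < M.prO s a' o then
              b'.val s * M.prO s a' o * QT (M.osb s a' o h) a'' else 0)
            ≤ (∑ s, if h : 0 < M.prO s a' o then
              b'.val s * M.prO s a' o * QF (M.osb s a' o h) a'' else 0) + c o * d := by
          rw [hc]
          simp only [Finset.sum_mul, ← Finset.sum_add_distrib]
          apply Finset.sum_le_sum
          intro s _
          by_cases h : 0 < M.prO s a' o
          · rw [dif_pos h, dif_pos h, if_pos h]
            have hcoef : 0 ≤ b'.val s * M.prO s a' o := mul_nonneg (b'.nonneg s) h.le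
            have := hub (M.osb s a' o h) a''
            nlinarith
          · rw [dif_neg h, dif_neg h, if_neg h, zero_mul, add_zero]
        refine le_trans h1 (add_le_add_left ?_ _)
        exact Finset.le_sup' (fun a'' => ∑ s, if h : 0 < M.prO s a' o then
          b'.val s * M.prO s a' o * QF (M.osb s a' o h) a'' else 0) (Finset.mem_univ a'')
      have hmain : (∑ o, Finset.univ.sup' Finset.univ_nonempty (fun a'' => ∑ s,
            if h : 0 < M.prO s a' o then
              b'.val s * M.prO s a' o * QT (M.osb s a' o h) a'' else 0))
          ≤ (∑ o, Finset.univ.sup' Finset.univ_nonempty (fun a'' => ∑ s,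
            if h : 0 < M.prO s a' o then
              b'.val s * M.prO s a' o * QF (M.osb s a' o h) a'' else 0)) + d := by
        calc (∑ o, Finset.univ.sup' Finset.univ_nonempty (fun a'' => ∑ s,
              if h : 0 < M.prO s a' o then
                b'.val s * M.prO s a' o * QT (M.osb s a' o h) a'' else 0))
            ≤ ∑ o, (Finset.univ.sup' Finset.univ_nonempty (fun a'' => ∑ s,
              if h : 0 < M.prO s a' o then
                b'.val s * M.prO s a' o * QF (M.osb s a' o h) a'' else 0) + c o * d) :=
              Finset.sum_le_sum fun o _ => hsup o
          _ = _ := by rw [Finset.sum_add_distrib, ← Finset.sum_mul, hc_sum, one_mul]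
      have hγ := M.γ_pos
      have := mul_le_mul_of_nonneg_left hmain hγ.le
      rw [mul_add] at this
      linarith
    have step2 := M.htib_le QF hQF b' a'
    have hfix := hQT b' a'
    linarith
  have hdle : d ≤ M.γ * d := csSup_le hne (by rintro x ⟨⟨b', a'⟩, rfl⟩; exact key b' a')
  have hγ1 := M.γ_lt_one
  have hγ0 := M.γ_pos
  have hd0 : d ≤ 0 := by nlinarith
  have hk := key b a
  nlinarith
end

section
/- For all functions Q, Q' : Δ(S) × A → ℝ, every constant C ≥ 0 such that |Q(b',a') − Q'(b',a')| ≤ C for every belief b' ∈ Δ(S) and every a' ∈ A, every belief b ∈ Δ(S) and every a ∈ A: |H_OTIB Q(b,a) − H_OTIB Q'(b,a)| ≤ γ·C. In particular H_OTIB is a contraction with Lipschitz constant γ with respect to the supremum norm on bounded functions Δ(S) × A → ℝ. -/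
open Finset
open scoped Classical

set_option linter.unusedSectionVars false

namespace POMDP

variable {S A O : Type*} [Fintype S] [Fintype A] [Fintype O] [Nonempty S] [Nonempty A]
  [Nonempty O]
variable (M : POMDP S A O)

lemma bprO_nonneg' (b : Belief S) (a : A) (o : O) : 0 ≤ M.bprO b a o :=
  Finset.sum_nonneg fun _ _ => M.bprSO_nonneg _ _ _ _

lemma prSO_eq_zero {s : S} {a : A} {o : O} (h : ¬ 0 < M.prO s a o) (s' : S) :
    M.prSO s a s' o = 0 := by
  have h0 : M.prO s a o = 0 := le_antisymm (not_lt.mp h) (M.prO_nonneg s a o)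
  exact (Finset.sum_eq_zero_iff_of_nonneg (fun x _ => M.prSO_nonneg s a x o)).mp h0 s'
    (Finset.mem_univ s')

lemma member_sum_one (b₀ : Belief S) (i : M.OSIdx) : ∑ s, (M.member b₀ i).val s = 1 := by
  cases i with
  | none => exact b₀.sum_one
  | some x => exact (M.osb x.1.1 x.1.2.1 x.1.2.2 x.2).sum_one

lemma weight_sum_one {b₀ tgt : Belief S} {w : M.OSIdx → ℝ} (hw : M.IsWeight b₀ tgt w) :
    ∑ i, w i = 1 := by
  calc ∑ i, w i = ∑ i, w i * ∑ s, (M.member b₀ i).val s := by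
        refine Finset.sum_congr rfl fun i _ => ?_
        rw [M.member_sum_one b₀ i, mul_one]
    _ = ∑ i, ∑ s, w i * (M.member b₀ i).val s := by
        refine Finset.sum_congr rfl fun i _ => Finset.mul_sum _ _ _
    _ = ∑ s, ∑ i, w i * (M.member b₀ i).val s := Finset.sum_comm
    _ = ∑ s, tgt.val s := Finset.sum_congr rfl fun s _ => hw.2 s
    _ = 1 := tgt.sum_one

/-- The canonical weight function `w_{b,a,o}`. -/
noncomputable def canonW (b : Belief S) (a : A) (o : O) : M.OSIdx → ℝ
  | none => 0
  | some x => if x.1.2.1 = a ∧ x.1.2.2 = o then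
      b.val x.1.1 * M.prO x.1.1 a o / M.bprO b a o else 0

lemma canonW_isWeight (b₀ b : Belief S) (a : A) (o : O) (h : 0 < M.bprO b a o) :
    M.IsWeight b₀ (M.post b a o h) (M.canonW b a o) := by
  constructor
  · intro i
    cases i with
    | none => exact le_refl 0
    | some x =>
      show 0 ≤ if x.1.2.1 = a ∧ x.1.2.2 = o then
          b.val x.1.1 * M.prO x.1.1 a o / M.bprO b a o else 0
      split
      · exact div_nonneg (mul_nonneg (b.nonneg _) (M.prO_nonneg _ _ _)) h.le
      · exact le_refl 0
  · intro s'
    -- the full function on S × A × O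
    set f : S × A × O → ℝ := fun x =>
      (if x.2.1 = a ∧ x.2.2 = o then b.val x.1 * M.prO x.1 a o / M.bprO b a o else 0) *
        (M.prSO x.1 x.2.1 s' x.2.2 / M.prO x.1 x.2.1 x.2.2) with hf
    have step1 : ∑ i, M.canonW b a o i * (M.member b₀ i).val s'
        = ∑ x : {x : S × A × O // 0 < M.prO x.1 x.2.1 x.2.2}, f x := by
      rw [Fintype.sum_option]
      show 0 * b₀.val s' + _ = _
      rw [zero_mul, zero_add]
      exact Finset.sum_congr rfl fun x _ => rfl
    have step2 : ∑ x : {x : S × A × O // 0 < M.prO x.1 x.2.1 x.2.2}, f x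
        = ∑ x : S × A × O, f x := by
      rw [← Finset.sum_subtype (Finset.univ.filter
        (fun x : S × A × O => 0 < M.prO x.1 x.2.1 x.2.2)) (by simp) f,
        Finset.sum_filter]
      refine Finset.sum_congr rfl fun x _ => ?_
      split
      · rfl
      · next hx =>
        show 0 = f x
        rw [hf]
        simp only [M.prSO_eq_zero hx s', zero_div, mul_zero]
    have step3 : ∑ x : S × A × O, f x
        = ∑ s : S, (b.val s * M.prO s a o / M.bprO b a o) * (M.prSO s a s' o / M.prO s a o) := by
      rw [Fintype.sum_prod_type]
      refine Finset.sum_congr rfl fun s _ => ?_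
      have : ∀ p : A × O, f (s, p) = if p = (a, o) then
          (b.val s * M.prO s a o / M.bprO b a o) * (M.prSO s a s' o / M.prO s a o) else 0 := by
        intro p
        rw [hf]
        by_cases hp : p = (a, o)
        · subst hp; simp
        · have : ¬ (p.1 = a ∧ p.2 = o) := by
            intro ⟨h1, h2⟩; exact hp (Prod.ext h1 h2)
          simp [this, hp]
      rw [Finset.sum_congr rfl fun p _ => this p, Finset.sum_ite_eq' Finset.univ (a, o)]
      simp
    have step4 : ∀ s : S,
        (b.val s * M.prO s a o / M.bprO b a o) * (M.prSO s a s' o / M.prO s a o)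
          = b.val s * M.prSO s a s' o / M.bprO b a o := by
      intro s
      by_cases hp : 0 < M.prO s a o
      · field_simp
      · rw [M.prSO_eq_zero hp s']
        have h0 : M.prO s a o = 0 := le_antisymm (not_lt.mp hp) (M.prO_nonneg s a o)
        rw [h0]
        simp
    rw [step1, step2, step3, Finset.sum_congr rfl fun s _ => step4 s]
    show _ = M.bprSO b a s' o / M.bprO b a o
    rw [← Finset.sum_div]
    rfl

lemma bprO_sum_one (b : Belief S) (a : A) : ∑ o, M.bprO b a o = 1 := by
  have : ∑ o, M.bprO b a o = ∑ s', ∑ s, b.val s * M.T s a s' * ∑ o, M.Z a s' o := by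
    unfold bprO bprSO prSO
    rw [Finset.sum_comm]
    refine Finset.sum_congr rfl fun s' _ => ?_
    rw [Finset.sum_comm]
    refine Finset.sum_congr rfl fun s _ => ?_
    rw [Finset.mul_sum]
    exact Finset.sum_congr rfl fun o _ => by ring
  rw [this]
  have : ∑ s', ∑ s, b.val s * M.T s a s' * ∑ o, M.Z a s' o = ∑ s', ∑ s, b.val s * M.T s a s' := by
    refine Finset.sum_congr rfl fun s' _ => Finset.sum_congr rfl fun s _ => ?_
    rw [M.Z_sum_one a s', mul_one]
  rw [this, Finset.sum_comm]
  have : ∑ s, ∑ s', b.val s * M.T s a s' = ∑ s, b.val s := by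
    refine Finset.sum_congr rfl fun s _ => ?_
    rw [← Finset.mul_sum, M.T_sum_one s a, mul_one]
  rw [this, b.sum_one]

lemma sum_weight_lower (b₀ : Belief S) (F : Belief S → A → ℝ) (a' : A) {tgt : Belief S}
    {w : M.OSIdx → ℝ} (hw : M.IsWeight b₀ tgt w) :
    Finset.univ.inf' Finset.univ_nonempty (fun i => F (M.member b₀ i) a') ≤
      ∑ i, w i * F (M.member b₀ i) a' := by
  set m := Finset.univ.inf' Finset.univ_nonempty (fun i => F (M.member b₀ i) a') with hm
  calc m = ∑ i, w i * m := by rw [← Finset.sum_mul, M.weight_sum_one hw, one_mul]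
    _ ≤ ∑ i, w i * F (M.member b₀ i) a' := Finset.sum_le_sum fun i _ =>
        mul_le_mul_of_nonneg_left (Finset.inf'_le _ (Finset.mem_univ i)) (hw.1 i)

lemma iInf_diff_le (b₀ : Belief S) {b : Belief S} {a : A} {o : O} (h : 0 < M.bprO b a o)
    (Q Q' : Belief S → A → ℝ) (C : ℝ)
    (hQQ' : ∀ b' a', Q b' a' - Q' b' a' ≤ C) (a' : A) :
    (⨅ w : {w : M.OSIdx → ℝ // M.IsWeight b₀ (M.post b a o h) w},
        ∑ i, (w : M.OSIdx → ℝ) i * Q (M.member b₀ i) a')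
      ≤ (⨅ w : {w : M.OSIdx → ℝ // M.IsWeight b₀ (M.post b a o h) w},
        ∑ i, (w : M.OSIdx → ℝ) i * Q' (M.member b₀ i) a') + C := by
  have hne : Nonempty {w : M.OSIdx → ℝ // M.IsWeight b₀ (M.post b a o h) w} :=
    ⟨⟨M.canonW b a o, M.canonW_isWeight b₀ b a o h⟩⟩
  have hbdd : BddBelow (Set.range fun w : {w : M.OSIdx → ℝ // M.IsWeight b₀ (M.post b a o h) w}
      => ∑ i, (w : M.OSIdx → ℝ) i * Q (M.member b₀ i) a') := by
    refine ⟨Finset.univ.inf' Finset.univ_nonempty (fun i => Q (M.member b₀ i) a'), ?_⟩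
    rintro _ ⟨w, rfl⟩
    exact M.sum_weight_lower b₀ Q a' w.2
  rw [← sub_le_iff_le_add]
  apply le_ciInf
  intro w
  have h1 : (⨅ w : {w : M.OSIdx → ℝ // M.IsWeight b₀ (M.post b a o h) w},
      ∑ i, (w : M.OSIdx → ℝ) i * Q (M.member b₀ i) a')
        ≤ ∑ i, (w : M.OSIdx → ℝ) i * Q (M.member b₀ i) a' := ciInf_le hbdd w
  have h2 : ∑ i, (w : M.OSIdx → ℝ) i * Q (M.member b₀ i) a'
      ≤ ∑ i, (w : M.OSIdx → ℝ) i * Q' (M.member b₀ i) a' + C := by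
    have hsub : ∑ i, (w : M.OSIdx → ℝ) i * Q (M.member b₀ i) a'
        - ∑ i, (w : M.OSIdx → ℝ) i * Q' (M.member b₀ i) a'
        = ∑ i, (w : M.OSIdx → ℝ) i * (Q (M.member b₀ i) a' - Q' (M.member b₀ i) a') := by
      rw [← Finset.sum_sub_distrib]
      exact Finset.sum_congr rfl fun i _ => by ring
    have hle : ∑ i, (w : M.OSIdx → ℝ) i * (Q (M.member b₀ i) a' - Q' (M.member b₀ i) a')
        ≤ ∑ i, (w : M.OSIdx → ℝ) i * C :=
      Finset.sum_le_sum fun i _ => mul_le_mul_of_nonneg_left (hQQ' _ _) (w.2.1 i)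
    have hCone : ∑ i, (w : M.OSIdx → ℝ) i * C = C := by
      rw [← Finset.sum_mul, M.weight_sum_one w.2, one_mul]
    linarith
  linarith

end POMDP

lemma abs_sup'_sub_sup'_le {ι : Type*} (s : Finset ι) (hs : s.Nonempty) (f g : ι → ℝ) (K : ℝ)
    (hfg : ∀ i ∈ s, |f i - g i| ≤ K) : |s.sup' hs f - s.sup' hs g| ≤ K := by
  rw [abs_sub_le_iff]
  constructor
  · rw [sub_le_iff_le_add]
    apply Finset.sup'_le
    intro i hi
    have h1 := (abs_sub_le_iff.mp (hfg i hi)).1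
    have h2 := Finset.le_sup' g hi
    linarith
  · rw [sub_le_iff_le_add]
    apply Finset.sup'_le
    intro i hi
    have h1 := (abs_sub_le_iff.mp (hfg i hi)).2
    have h2 := Finset.le_sup' f hi
    linarith

/-- `H_OTIB` contracts sup-distance by a factor `γ`. -/
theorem HOTIB_contraction {S A O : Type*} [Fintype S] [Fintype A] [Fintype O]
    [Nonempty S] [Nonempty A] [Nonempty O] (M : POMDP S A O) (b₀ : Belief S)
    (Q Q' : Belief S → A → ℝ) (C : ℝ) (hC : 0 ≤ C)
    (h : ∀ (b' : Belief S) (a' : A), |Q b' a' - Q' b' a'| ≤ C)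
    (b : Belief S) (a : A) :
    |M.HOTIB b₀ Q b a - M.HOTIB b₀ Q' b a| ≤ M.γ * C := by
  classical
  set dQ : O → ℝ := fun o => if h : 0 < M.bprO b a o then
    Finset.univ.sup' Finset.univ_nonempty (fun a' =>
      M.bprO b a o * ⨅ w : {w : M.OSIdx → ℝ // M.IsWeight b₀ (M.post b a o h) w},
        ∑ i, (w : M.OSIdx → ℝ) i * Q (M.member b₀ i) a')
    else 0 with hdQ
  set dQ' : O → ℝ := fun o => if h : 0 < M.bprO b a o then
    Finset.univ.sup' Finset.univ_nonempty (fun a' =>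
      M.bprO b a o * ⨅ w : {w : M.OSIdx → ℝ // M.IsWeight b₀ (M.post b a o h) w},
        ∑ i, (w : M.OSIdx → ℝ) i * Q' (M.member b₀ i) a')
    else 0 with hdQ'
  have hdiff : M.HOTIB b₀ Q b a - M.HOTIB b₀ Q' b a = M.γ * ∑ o, (dQ o - dQ' o) := by
    show M.expR b a + M.γ * ∑ o, dQ o - (M.expR b a + M.γ * ∑ o, dQ' o) = _
    rw [Finset.sum_sub_distrib]
    ring
  rw [hdiff, abs_mul, abs_of_pos M.γ_pos]
  refine mul_le_mul_of_nonneg_left ?_ M.γ_pos.le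
  calc |∑ o, (dQ o - dQ' o)| ≤ ∑ o, |dQ o - dQ' o| := Finset.abs_sum_le_sum_abs _ _
    _ ≤ ∑ o, M.bprO b a o * C := by
        refine Finset.sum_le_sum fun o _ => ?_
        by_cases ho : 0 < M.bprO b a o
        · rw [hdQ, hdQ']
          simp only [dif_pos ho]
          refine abs_sup'_sub_sup'_le _ _ _ _ _ fun a' _ => ?_
          rw [← mul_sub, abs_mul, abs_of_pos ho]
          refine mul_le_mul_of_nonneg_left ?_ ho.le
          rw [abs_sub_le_iff]
          constructor
          · rw [sub_le_iff_le_add]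
            exact (M.iInf_diff_le b₀ ho Q Q' C
              (fun b' a'' => (abs_sub_le_iff.mp (h b' a'')).1) a').trans_eq (add_comm _ _)
          · rw [sub_le_iff_le_add]
            exact (M.iInf_diff_le b₀ ho Q' Q C
              (fun b' a'' => (abs_sub_le_iff.mp (h b' a'')).2) a').trans_eq (add_comm _ _)
        · rw [hdQ, hdQ']
          simp only [dif_neg ho]
          have h0 : M.bprO b a o = 0 := le_antisymm (not_lt.mp ho) (M.bprO_nonneg' b a o)
          rw [h0]
          simp
    _ = C := by rw [← Finset.sum_mul, M.bprO_sum_one b a, one_mul]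
end

section
/- Let b, b' be beliefs, λ ∈ [0,1], and b'' = λb + (1−λ)b'. Let a ∈ A and o ∈ O with Pr(o|b,a) > 0 and Pr(o|b',a) > 0; then Pr(o|b'',a) = λ·Pr(o|b,a) + (1−λ)·Pr(o|b',a) > 0, and if w ∈ W_{b,a,o} and w' ∈ W_{b',a,o}, then the map w'' defined on B_SAO by w''(b̃) = (λ·Pr(o|b,a)·w(b̃) + (1−λ)·Pr(o|b',a)·w'(b̃)) / Pr(o|b'',a) belongs to W_{b'',a,o}, i.e., w'' is a weight function for the posterior belief b_{b'',a,o} over B_SAO. -/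
open Finset
open scoped Classical

set_option linter.unusedSectionVars false

/-- Mixing weight functions: if `b'' = λ·b + (1-λ)·b'` with `Pr(o|b,a) > 0` and
`Pr(o|b',a) > 0`, then `Pr(o|b'',a) = λ·Pr(o|b,a) + (1-λ)·Pr(o|b',a) > 0`, and the
corresponding mixture of weight functions for `b_{b,a,o}` and `b_{b',a,o}` is a weight
function for `b_{b'',a,o}` over `B_SAO`. -/
theorem mix_weight {S A O : Type*} [Fintype S] [Fintype A] [Fintype O]
    [Nonempty S] [Nonempty A] [Nonempty O] (M : POMDP S A O) (b₀ : Belief S)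
    (b b' : Belief S) (l : ℝ) (h0 : 0 ≤ l) (h1 : l ≤ 1) (a : A) (o : O)
    (hb : 0 < M.bprO b a o) (hb' : 0 < M.bprO b' a o)
    (w w' : M.OSIdx → ℝ)
    (hw : M.IsWeight b₀ (M.post b a o hb) w)
    (hw' : M.IsWeight b₀ (M.post b' a o hb') w') :
    M.bprO (Belief.mix b b' l h0 h1) a o = l * M.bprO b a o + (1 - l) * M.bprO b' a o ∧
    ∃ hpos : 0 < M.bprO (Belief.mix b b' l h0 h1) a o,
      M.IsWeight b₀ (M.post (Belief.mix b b' l h0 h1) a o hpos) (fun i =>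
        (l * M.bprO b a o * w i + (1 - l) * M.bprO b' a o * w' i)
          / M.bprO (Belief.mix b b' l h0 h1) a o) := by
  have hSO : ∀ s', M.bprSO (Belief.mix b b' l h0 h1) a s' o
      = l * M.bprSO b a s' o + (1 - l) * M.bprSO b' a s' o := by
    intro s'
    simp only [POMDP.bprSO, Belief.mix, Finset.mul_sum, ← Finset.sum_add_distrib]
    exact Finset.sum_congr rfl fun s _ => by ring
  have hO : M.bprO (Belief.mix b b' l h0 h1) a o
      = l * M.bprO b a o + (1 - l) * M.bprO b' a o := by
    simp only [POMDP.bprO, hSO, Finset.mul_sum, ← Finset.sum_add_distrib]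
  have hpos : 0 < M.bprO (Belief.mix b b' l h0 h1) a o := by
    rw [hO]
    rcases h0.lt_or_eq with h | h
    · have := mul_pos h hb
      nlinarith [mul_nonneg (by linarith : (0:ℝ) ≤ 1 - l) hb'.le]
    · simp [← h]; linarith
  refine ⟨hO, hpos, fun i => div_nonneg ?_ hpos.le, fun s => ?_⟩
  · exact add_nonneg (mul_nonneg (mul_nonneg h0 hb.le) (hw.1 i))
      (mul_nonneg (mul_nonneg (by linarith) hb'.le) (hw'.1 i))
  · have e1 := hw.2 s
    have e2 := hw'.2 s
    simp only [POMDP.post] at e1 e2 ⊢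
    have : ∑ i, (l * M.bprO b a o * w i + (1 - l) * M.bprO b' a o * w' i)
        / M.bprO (Belief.mix b b' l h0 h1) a o * (M.member b₀ i).val s
        = (l * M.bprO b a o * (∑ i, w i * (M.member b₀ i).val s)
          + (1 - l) * M.bprO b' a o * (∑ i, w' i * (M.member b₀ i).val s))
          / M.bprO (Belief.mix b b' l h0 h1) a o := by
      rw [Finset.mul_sum, Finset.mul_sum, ← Finset.sum_add_distrib, Finset.sum_div]
      exact Finset.sum_congr rfl fun i _ => by ring
    rw [this, e1, e2, hSO]
    field_simp
end
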